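/- Let X = (X_1,...,X_n) be independent random elements, X' an independent copy, f : 𝒳^n → ℝ^d measurable with f(X) centered and square-integrable, and set T_A := ∑_{j ∉ A} [Δ_j f(X)][Δ_j f(X^A)]^T ∈ ℝ^{d×d} and T := (1/2) ∑_{A ⊊ [n]} k_{n,A} T_A with k_{n,A} = 1/(C(n,|A|)(n−|A|)). Then E[T] equals the covariance matrix of W = f(X), i.e., (E T)_{kl} = Cov(f_k(X), f_l(X)) for all k, l ∈ [d]. -/

import Mathlib

open MeasureTheory ProbabilityTheory


theorem map_pi_of_iIndepFun' {Ω ι : Type*} [MeasurableSpace Ω] [Fintype ι] {α : Type*}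
    [mα : MeasurableSpace α] {μ : Measure Ω} [IsProbabilityMeasure μ]
    (f : ι → Ω → α) (hf : ∀ i, Measurable (f i)) (h : iIndepFun f μ) :
    μ.map (fun ω i => f i ω) = Measure.pi (fun i => μ.map (f i)) := by
  have hpm : ∀ i, IsProbabilityMeasure (μ.map (f i)) :=
    fun i => Measure.isProbabilityMeasure_map (hf i).aemeasurable
  refine (Measure.pi_eq fun s hs => ?_).symm
  rw [Measure.map_apply (measurable_pi_lambda _ hf) (MeasurableSet.univ_pi hs)]
  have hpre : (fun ω i => f i ω) ⁻¹' (Set.pi Set.univ s) = ⋂ i ∈ Finset.univ, f i ⁻¹' s i := by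
    ext ω; simp [Set.mem_pi]
  rw [hpre, h.measure_inter_preimage_eq_mul Finset.univ (fun i _ => hs i)]
  exact Finset.prod_congr rfl fun i _ => (Measure.map_apply (hf i) (hs i)).symm

theorem pi_map_comp_equiv' {ι α : Type*} [Fintype ι] [MeasurableSpace α]
    (ν : ι → Measure α) [∀ i, IsProbabilityMeasure (ν i)] (e : ι ≃ ι) :
    (Measure.pi ν).map (fun x i => x (e i)) = Measure.pi (fun i => ν (e i)) := by
  have : ∀ i, IsProbabilityMeasure (ν (e i)) := fun i => inferInstance
  refine (Measure.pi_eq fun s hs => ?_).symm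
  rw [Measure.map_apply (measurable_pi_lambda (fun (x : ι → α) i => x (e i)) fun i => measurable_pi_apply (e i))
    (MeasurableSet.univ_pi hs)]
  have hpre : (fun (x : ι → α) i => x (e i)) ⁻¹' (Set.pi Set.univ s)
      = Set.pi Set.univ (fun j => s (e.symm j)) := by
    ext x
    simp only [Set.mem_preimage, Set.mem_pi, Set.mem_univ, true_implies]
    exact ⟨fun h j => by simpa using h (e.symm j), fun h i => by simpa using h (e i)⟩
  rw [hpre, Measure.pi_pi]
  calc ∏ j, ν j (s (e.symm j)) = ∏ i, ν (e i) (s (e.symm (e i))) := (Equiv.prod_comp e _).symm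
    _ = ∏ i, ν (e i) (s i) := by simp

theorem telescope_sum' {n : ℕ} (a : Finset (Fin n) → ℝ) :
    ∑ A ∈ (Finset.univ : Finset (Fin n)).powerset.filter (· ≠ Finset.univ),
      (1 / ((n.choose A.card : ℝ) * (n - A.card))) * ∑ j ∈ Aᶜ, (a A - a (insert j A))
    = a ∅ - a Finset.univ := by
  classical
  have hcard : ∀ A : Finset (Fin n), (Aᶜ.card : ℝ) = (n : ℝ) - A.card := by
    intro A
    rw [Finset.card_compl, Fintype.card_fin, Nat.cast_sub (by simpa using Finset.card_le_univ A)]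
  -- split the inner sum
  have hsplit : ∀ A : Finset (Fin n), A ≠ Finset.univ →
      (1 / ((n.choose A.card : ℝ) * (n - A.card))) * ∑ j ∈ Aᶜ, (a A - a (insert j A))
      = a A / (n.choose A.card : ℝ)
        - ∑ j ∈ Aᶜ, (1 / ((n.choose A.card : ℝ) * (n - A.card))) * a (insert j A) := by
    intro A hA
    have hlt : A.card < n := by
      have hle : A.card ≤ n := by simpa using Finset.card_le_univ A
      rcases lt_or_eq_of_le hle with h | h
      · exact h
      · exact absurd (Finset.eq_univ_of_card A (by simpa using h)) hA
    have hC : (0:ℝ) < (n.choose A.card : ℝ) := by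
      exact_mod_cast Nat.choose_pos hlt.le
    have hnc : (0:ℝ) < (n:ℝ) - A.card := by
      have : (A.card : ℝ) < n := by exact_mod_cast hlt
      linarith
    rw [Finset.sum_sub_distrib, Finset.sum_const, mul_sub, Finset.mul_sum]
    congr 1
    rw [nsmul_eq_mul, hcard A]
    field_simp
  rw [Finset.sum_congr rfl (fun A hA => hsplit A (by simpa using (Finset.mem_filter.1 hA).2)),
    Finset.sum_sub_distrib]
  -- first sum
  have h1 : ∑ A ∈ (Finset.univ : Finset (Fin n)).powerset.filter (· ≠ Finset.univ),
      a A / (n.choose A.card : ℝ)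
      = (∑ A ∈ (Finset.univ : Finset (Fin n)).powerset, a A / (n.choose A.card : ℝ))
        - a Finset.univ := by
    rw [Finset.filter_ne', Finset.sum_erase_eq_sub (by simp)]
    simp
  -- second sum: reindex
  have h2 : ∑ A ∈ (Finset.univ : Finset (Fin n)).powerset.filter (· ≠ Finset.univ),
      ∑ j ∈ Aᶜ, (1 / ((n.choose A.card : ℝ) * (n - A.card))) * a (insert j A)
      = (∑ B ∈ (Finset.univ : Finset (Fin n)).powerset, a B / (n.choose B.card : ℝ))
        - a ∅ := by
    rw [Finset.sum_sigma']
    rw [Finset.sum_nbij' (i := fun p => (⟨insert p.2 p.1, p.2⟩ :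
          (B : Finset (Fin n)) × Fin n))
        (j := fun p => (⟨p.1.erase p.2, p.2⟩ : (A : Finset (Fin n)) × Fin n))
        (t := ((Finset.univ : Finset (Fin n)).powerset.filter (· ≠ ∅)).sigma fun B => B)
        (g := fun p => (1 / ((n.choose (p.1.erase p.2).card : ℝ) *
          (n - (p.1.erase p.2).card))) * a p.1)]
    · -- now compute the reindexed sum
      rw [Finset.sum_sigma]
      have hB : ∀ B ∈ (Finset.univ : Finset (Fin n)).powerset.filter (· ≠ ∅),
          ∑ j ∈ B, (1 / ((n.choose (B.erase j).card : ℝ) * (n - (B.erase j).card))) * a B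
          = a B / (n.choose B.card : ℝ) := by
        intro B hB
        simp only [Finset.mem_filter, Finset.mem_powerset] at hB
        obtain ⟨-, hBne⟩ := hB
        have hpos : 0 < B.card := Finset.card_pos.2 (Finset.nonempty_iff_ne_empty.2 hBne)
        have hle : B.card ≤ n := by simpa using Finset.card_le_univ B
        have hec : ∀ j ∈ B, (B.erase j).card = B.card - 1 := fun j hj =>
          Finset.card_erase_of_mem hj
        rw [Finset.sum_congr rfl fun j hj => by rw [hec j hj]]
        rw [Finset.sum_const, nsmul_eq_mul]
        have hnat : n.choose B.card * B.card = n.choose (B.card - 1) * (n - (B.card - 1)) := by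
          have h' := Nat.choose_succ_right_eq n (B.card - 1)
          have h'' : B.card - 1 + 1 = B.card := by omega
          rw [h''] at h'
          rw [h']
        have hCpos : (0:ℝ) < (n.choose B.card : ℝ) := by exact_mod_cast Nat.choose_pos hle
        have hC1pos : (0:ℝ) < (n.choose (B.card - 1) : ℝ) := by
          exact_mod_cast Nat.choose_pos (le_trans (Nat.sub_le _ _) hle)
        have hcast : (n:ℝ) - (B.card - 1 : ℕ) = ((n - (B.card - 1) : ℕ) : ℝ) := by
          rw [Nat.cast_sub (le_trans (Nat.sub_le _ _) hle)]
        have hnpos : (0:ℝ) < (n:ℝ) - (B.card - 1 : ℕ) := by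
          rw [hcast]
          have : 0 < n - (B.card - 1) := Nat.sub_pos_of_lt (lt_of_lt_of_le
            (Nat.pred_lt hpos.ne') hle)
          exact_mod_cast this
        have hBpos : (0:ℝ) < (B.card : ℝ) := by exact_mod_cast hpos
        have hnatR : (n.choose B.card : ℝ) * B.card
            = (n.choose (B.card - 1) : ℝ) * ((n - (B.card - 1) : ℕ) : ℝ) := by
          exact_mod_cast hnat
        rw [hcast, ← hnatR]
        field_simp
      rw [Finset.sum_congr rfl hB, Finset.filter_ne', Finset.sum_erase_eq_sub (by simp)]
      simp
    · rintro ⟨A, j⟩ hp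
      simp only [Finset.mem_sigma, Finset.mem_filter, Finset.mem_powerset, Finset.mem_compl] at hp ⊢
      exact ⟨⟨Finset.subset_univ _, by simp [Finset.insert_ne_empty]⟩, Finset.mem_insert_self _ _⟩
    · rintro ⟨B, j⟩ hp
      simp only [Finset.mem_sigma, Finset.mem_filter, Finset.mem_powerset, Finset.mem_compl] at hp ⊢
      obtain ⟨⟨-, hBne⟩, hj⟩ := hp
      constructor
      · constructor
        · exact Finset.subset_univ _
        · intro h
          have h1' : (B.erase j).card = n := by rw [h]; simp
          have h2' : (B.erase j).card < B.card := Finset.card_erase_lt_of_mem hj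
          have h3' : B.card ≤ n := by simpa using Finset.card_le_univ B
          omega
      · simp
    · rintro ⟨A, j⟩ hp
      simp only [Finset.mem_sigma, Finset.mem_filter, Finset.mem_powerset, Finset.mem_compl] at hp
      simp [Finset.erase_insert hp.2]
    · rintro ⟨B, j⟩ hp
      simp only [Finset.mem_sigma, Finset.mem_filter, Finset.mem_powerset, Finset.mem_compl] at hp
      simp [Finset.insert_erase hp.2]
    · rintro ⟨A, j⟩ hp
      simp only [Finset.mem_sigma, Finset.mem_filter, Finset.mem_powerset, Finset.mem_compl] at hp
      simp [Finset.erase_insert hp.2]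
  rw [h1, h2]
  ring


/-- `E[T]` equals the covariance matrix of `W = f(X)`, where
`T = (1/2) ∑_{A ⊊ [n]} k_{n,A} ∑_{j∉A} [Δ_j f(X)][Δ_j f(X^A)]ᵀ`. -/
theorem expectation_T_eq_covariance_matrix {Ω : Type*} {𝒳 : Type*} [MeasurableSpace Ω]
    [m𝒳 : MeasurableSpace 𝒳] {μ : Measure Ω} [IsProbabilityMeasure μ]
    {n d : ℕ} (X X' : Fin n → Ω → 𝒳)
    (hX : ∀ i, Measurable (X i)) (hX' : ∀ i, Measurable (X' i))
    (hindep : iIndepFun (Sum.elim X X') μ)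
    (hid : ∀ i, IdentDistrib (X' i) (X i) μ μ)
    (f : (Fin n → 𝒳) → EuclideanSpace ℝ (Fin d)) (hf : Measurable f)
    (hf2 : ∀ k : Fin d, MemLp (fun ω => f (fun i => X i ω) k) 2 μ)
    (hcent : ∀ k : Fin d, ∫ ω, f (fun i => X i ω) k ∂μ = 0)
    (XA : Finset (Fin n) → Ω → Fin n → 𝒳)
    (hXA : ∀ A ω i, XA A ω i = if i ∈ A then X' i ω else X i ω)
    (T : Ω → Matrix (Fin d) (Fin d) ℝ)
    (hT : ∀ ω k l, T ω k l =
      (1 / 2) * ∑ A ∈ (Finset.univ : Finset (Fin n)).powerset.filter (· ≠ Finset.univ),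
        (1 / ((n.choose A.card : ℝ) * (n - A.card))) *
          ∑ j ∈ Aᶜ, (f (fun i => X i ω) k - f (XA {j} ω) k) *
            (f (XA A ω) l - f (XA (insert j A) ω) l)) :
    ∀ k l : Fin d, ∫ ω, T ω k l ∂μ =
      (∫ ω, f (fun i => X i ω) k * f (fun i => X i ω) l ∂μ) -
        (∫ ω, f (fun i => X i ω) k ∂μ) * ∫ ω, f (fun i => X i ω) l ∂μ := by
  classical
  intro k l
  set gk : (Fin n → 𝒳) → ℝ := fun v => f v k with hgk_def
  set gl : (Fin n → 𝒳) → ℝ := fun v => f v l with hgl_def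
  have hgk : Measurable gk := (measurable_pi_apply k).comp ((WithLp.measurable_ofLp 2 _).comp hf)
  have hgl : Measurable gl := (measurable_pi_apply l).comp ((WithLp.measurable_ofLp 2 _).comp hf)
  have hmeasZ : ∀ s : Fin n ⊕ Fin n, Measurable (Sum.elim X X' s) := by
    rintro (i | i)
    exacts [hX i, hX' i]
  set Z : Ω → (Fin n ⊕ Fin n) → 𝒳 := fun ω s => Sum.elim X X' s ω with hZ_def
  have hZ : Measurable Z := measurable_pi_lambda _ hmeasZ
  set ν : (Fin n ⊕ Fin n) → Measure 𝒳 := fun s => μ.map (Sum.elim X X' s) with hν_def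
  haveI hνprob : ∀ s, IsProbabilityMeasure (ν s) :=
    fun s => Measure.isProbabilityMeasure_map (hmeasZ s).aemeasurable
  set P : Measure ((Fin n ⊕ Fin n) → 𝒳) := Measure.pi ν with hP_def
  have hmapZ : μ.map Z = P := map_pi_of_iIndepFun' _ hmeasZ hindep
  haveI : IsProbabilityMeasure P := by rw [hP_def]; infer_instance
  -- the swapping equivalences
  set swf : Finset (Fin n) → (Fin n ⊕ Fin n) → (Fin n ⊕ Fin n) := fun S =>
    Sum.elim (fun i => if i ∈ S then Sum.inr i else Sum.inl i)
             (fun i => if i ∈ S then Sum.inl i else Sum.inr i) with hswf_def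
  have hswf_inv : ∀ S s, swf S (swf S s) = s := by
    rintro S (i | i) <;> by_cases h : i ∈ S <;> simp [hswf_def, h]
  set sw : Finset (Fin n) → (Fin n ⊕ Fin n) ≃ (Fin n ⊕ Fin n) := fun S =>
    ⟨swf S, swf S, hswf_inv S, hswf_inv S⟩ with hsw_def
  have hνsw : ∀ S s, ν (sw S s) = ν s := by
    rintro S (i | i) <;> by_cases h : i ∈ S <;>
      simp [hsw_def, hswf_def, hν_def, h, (hid i).map_eq]
  have hPsw : ∀ S : Finset (Fin n), P.map (fun x s => x (sw S s)) = P := by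
    intro S
    rw [hP_def, pi_map_comp_equiv' ν (sw S)]
    exact congrArg Measure.pi (funext (hνsw S))
  -- the selection maps
  set sel : Finset (Fin n) → ((Fin n ⊕ Fin n) → 𝒳) → (Fin n → 𝒳) :=
    fun S x i => if i ∈ S then x (Sum.inr i) else x (Sum.inl i) with hsel_def
  have hselmeas : ∀ S, Measurable (sel S) := by
    intro S
    apply measurable_pi_lambda
    intro i
    have h : (fun x : (Fin n ⊕ Fin n) → 𝒳 => sel S x i)
        = fun x => x (if i ∈ S then Sum.inr i else Sum.inl i) := by
      funext x
      simp only [hsel_def]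
      exact (apply_ite x _ _ _).symm
    rw [h]
    exact measurable_pi_apply _
  have hselmeas' : ∀ (S : Finset (Fin n)) (g0 : (Fin n → 𝒳) → ℝ), Measurable g0 →
      Measurable (fun x => g0 (sel S x)) := fun S g0 hg0 => hg0.comp (hselmeas S)
  have hselZ : ∀ S ω, sel S (Z ω) = XA S ω := by
    intro S ω
    funext i
    rw [hXA]
    by_cases h : i ∈ S <;> simp [hsel_def, hZ_def, h]
  have hXAempty : ∀ ω, XA ∅ ω = fun i => X i ω := by
    intro ω; funext i; rw [hXA]; simp
  have hselsw : ∀ (S T' : Finset (Fin n)) x,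
      sel S (fun s => x (sw T' s)) = sel (symmDiff S T') x := by
    intro S T' x
    funext i
    by_cases h1 : i ∈ S <;> by_cases h2 : i ∈ T' <;>
      simp [hsel_def, hsw_def, hswf_def, Finset.mem_symmDiff, h1, h2]
  have hsd0 : ∀ T' : Finset (Fin n), symmDiff (∅ : Finset (Fin n)) T' = T' := by
    intro T'; ext i; simp [Finset.mem_symmDiff]
  have hsd2 : ∀ (A : Finset (Fin n)) j, j ∉ A → symmDiff A {j} = insert j A := by
    intro A j hj
    ext i
    by_cases h : i = j <;> simp [Finset.mem_symmDiff, h, hj]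
  have hsd3 : ∀ (A : Finset (Fin n)) j, j ∉ A → symmDiff (insert j A) {j} = A := by
    intro A j hj
    ext i
    by_cases h : i = j <;> simp [Finset.mem_symmDiff, h, hj]
  have hsd4 : ∀ j : Fin n, symmDiff ({j} : Finset (Fin n)) {j} = ∅ := by
    intro j; simp [symmDiff_self]
  -- products of selections
  set G : Finset (Fin n) → Finset (Fin n) → ((Fin n ⊕ Fin n) → 𝒳) → ℝ :=
    fun S1 S2 x => gk (sel S1 x) * gl (sel S2 x) with hG_def
  have hGmeas : ∀ S1 S2, Measurable (G S1 S2) := fun S1 S2 =>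
    (hgk.comp (hselmeas S1)).mul (hgl.comp (hselmeas S2))
  set II : Finset (Fin n) → Finset (Fin n) → ℝ :=
    fun S1 S2 => ∫ ω, f (XA S1 ω) k * f (XA S2 ω) l ∂μ with hII_def
  have hIIP : ∀ S1 S2, II S1 S2 = ∫ x, G S1 S2 x ∂P := by
    intro S1 S2
    rw [← hmapZ, integral_map hZ.aemeasurable (hGmeas S1 S2).aestronglyMeasurable]
    simp only [hII_def, hG_def, hselZ, hgk_def, hgl_def]
  -- square integrability of the selected components
  have memsel : ∀ (g0 : (Fin n → 𝒳) → ℝ), Measurable g0 →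
      MemLp (fun x => g0 (sel ∅ x)) 2 P →
      ∀ S, MemLp (fun x => g0 (sel S x)) 2 P := by
    intro g0 hg0 hbase S
    have hw : Measurable (fun x : (Fin n ⊕ Fin n) → 𝒳 => fun s => x (sw S s)) :=
      measurable_pi_lambda _ fun s => measurable_pi_apply _
    have h1 : MemLp (fun x => g0 (sel ∅ x)) 2 (P.map (fun x s => x (sw S s))) := by
      rw [hPsw S]; exact hbase
    have h2 := (memLp_map_measure_iff (hselmeas' ∅ g0 hg0).aestronglyMeasurable
        hw.aemeasurable).1 h1
    have h3 : ((fun x => g0 (sel ∅ x)) ∘ (fun x s => x (sw S s)))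
        = fun x => g0 (sel S x) := by
      funext x
      simp only [Function.comp_apply]
      rw [hselsw, hsd0]
    rwa [h3] at h2
  have membase : ∀ (g0 : (Fin n → 𝒳) → ℝ), Measurable g0 →
      MemLp (fun ω => g0 (fun i => X i ω)) 2 μ →
      MemLp (fun x => g0 (sel ∅ x)) 2 P := by
    intro g0 hg0 hbase
    rw [← hmapZ,
      memLp_map_measure_iff (hselmeas' ∅ g0 hg0).aestronglyMeasurable hZ.aemeasurable]
    have h3 : ((fun x => g0 (sel ∅ x)) ∘ Z) = fun ω => g0 (fun i => X i ω) := by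
      funext ω
      simp only [Function.comp_apply, hselZ, hXAempty]
    rwa [h3]
  have memk : ∀ S, MemLp (fun x => gk (sel S x)) 2 P :=
    memsel gk hgk (membase gk hgk (hf2 k))
  have meml : ∀ S, MemLp (fun x => gl (sel S x)) 2 P :=
    memsel gl hgl (membase gl hgl (hf2 l))
  have hGint : ∀ S1 S2, Integrable (G S1 S2) P := by
    intro S1 S2
    have hm := (meml S2).smul (r := 1) (memk S1)
    rw [memLp_one_iff_integrable] at hm
    have h3 : (fun x => gk (sel S1 x)) • (fun x => gl (sel S2 x)) = G S1 S2 := by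
      funext x
      simp [hG_def, Pi.smul_apply, smul_eq_mul]
    rwa [h3] at hm
  have hIntμ : ∀ S1 S2, Integrable (fun ω => f (XA S1 ω) k * f (XA S2 ω) l) μ := by
    intro S1 S2
    have h1 : Integrable (G S1 S2) (μ.map Z) := by rw [hmapZ]; exact hGint S1 S2
    have h2 := (integrable_map_measure (hGmeas S1 S2).aestronglyMeasurable hZ.aemeasurable).1 h1
    have h3 : (G S1 S2 ∘ Z) = fun ω => f (XA S1 ω) k * f (XA S2 ω) l := by
      funext ω
      simp only [Function.comp_apply, hG_def, hselZ, hgk_def, hgl_def]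
    rwa [h3] at h2
  -- the swap identity
  have hIIsw : ∀ S1 S2 T', II S1 S2 = II (symmDiff S1 T') (symmDiff S2 T') := by
    intro S1 S2 T'
    rw [hIIP, hIIP]
    have hw : Measurable (fun x : (Fin n ⊕ Fin n) → 𝒳 => fun s => x (sw T' s)) :=
      measurable_pi_lambda _ fun s => measurable_pi_apply _
    conv_lhs => rw [← hPsw T']
    rw [integral_map hw.aemeasurable (hGmeas S1 S2).aestronglyMeasurable]
    refine integral_congr_ae (Filter.Eventually.of_forall fun x => ?_)
    simp only [hG_def]
    rw [hselsw, hselsw]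
  -- the independence property : II ∅ univ = 0
  have hselP0 : ∫ x, gk (sel ∅ x) ∂P = 0 := by
    rw [← hmapZ, integral_map hZ.aemeasurable (hselmeas' ∅ gk hgk).aestronglyMeasurable]
    have h3 : (fun ω => gk (sel ∅ (Z ω))) = fun ω => f (fun i => X i ω) k := by
      funext ω
      simp only [hselZ, hXAempty, hgk_def]
    rw [h3]
    exact hcent k
  have hIIuniv : II ∅ Finset.univ = 0 := by
    haveI : ∀ i : Fin n, IsProbabilityMeasure (ν (Sum.inl i)) := fun i => hνprob _
    haveI : ∀ i : Fin n, IsProbabilityMeasure (ν (Sum.inr i)) := fun i => hνprob _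
    set ψ := MeasurableEquiv.sumPiEquivProdPi (fun _ : Fin n ⊕ Fin n => 𝒳) with hψ_def
    have mp : MeasurePreserving ψ P
        ((Measure.pi fun i : Fin n => ν (Sum.inl i)).prod
          (Measure.pi fun i : Fin n => ν (Sum.inr i))) :=
      measurePreserving_sumPiEquivProdPi ν
    have hsel0 : ∀ x : (Fin n ⊕ Fin n) → 𝒳, sel ∅ x = fun i => x (Sum.inl i) := by
      intro x; funext i; simp [hsel_def]
    have hselU : ∀ x : (Fin n ⊕ Fin n) → 𝒳, sel Finset.univ x = fun i => x (Sum.inr i) := by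
      intro x; funext i; simp [hsel_def]
    have key : ∀ g0 h0 : (Fin n → 𝒳) → ℝ,
        ∫ x, g0 (sel ∅ x) * h0 (sel Finset.univ x) ∂P
        = (∫ v, g0 v ∂(Measure.pi fun i : Fin n => ν (Sum.inl i)))
          * ∫ v, h0 v ∂(Measure.pi fun i : Fin n => ν (Sum.inr i)) := by
      intro g0 h0
      have e1 : ∀ x, g0 (sel ∅ x) * h0 (sel Finset.univ x)
          = (fun p : (Fin n → 𝒳) × (Fin n → 𝒳) => g0 p.1 * h0 p.2) (ψ x) := by
        intro x
        rw [hsel0, hselU]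
        rfl
      calc ∫ x, g0 (sel ∅ x) * h0 (sel Finset.univ x) ∂P
          = ∫ x, (fun p : (Fin n → 𝒳) × (Fin n → 𝒳) => g0 p.1 * h0 p.2) (ψ x) ∂P :=
            integral_congr_ae (Filter.Eventually.of_forall e1)
        _ = ∫ p, (fun p : (Fin n → 𝒳) × (Fin n → 𝒳) => g0 p.1 * h0 p.2) p
              ∂((Measure.pi fun i : Fin n => ν (Sum.inl i)).prod
                (Measure.pi fun i : Fin n => ν (Sum.inr i))) :=
            mp.integral_comp ψ.measurableEmbedding
              (fun p : (Fin n → 𝒳) × (Fin n → 𝒳) => g0 p.1 * h0 p.2)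
        _ = (∫ v, g0 v ∂(Measure.pi fun i : Fin n => ν (Sum.inl i)))
              * ∫ v, h0 v ∂(Measure.pi fun i : Fin n => ν (Sum.inr i)) :=
            integral_prod_mul g0 h0
    have hgkL : ∫ x, gk (sel ∅ x) ∂P
        = ∫ v, gk v ∂(Measure.pi fun i : Fin n => ν (Sum.inl i)) := by
      have hk := key gk (fun _ => (1:ℝ))
      simpa using hk
    rw [hIIP]
    have : ∫ x, G ∅ Finset.univ x ∂P
        = (∫ v, gk v ∂(Measure.pi fun i : Fin n => ν (Sum.inl i)))
          * ∫ v, gl v ∂(Measure.pi fun i : Fin n => ν (Sum.inr i)) := key gk gl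
    rw [this, ← hgkL, hselP0, zero_mul]
  -- expansion of each term
  have hexp : ∀ (A : Finset (Fin n)) (j : Fin n),
      (fun ω => (f (fun i => X i ω) k - f (XA {j} ω) k) *
        (f (XA A ω) l - f (XA (insert j A) ω) l))
      = fun ω => (f (XA ∅ ω) k * f (XA A ω) l - f (XA ∅ ω) k * f (XA (insert j A) ω) l)
        - (f (XA {j} ω) k * f (XA A ω) l - f (XA {j} ω) k * f (XA (insert j A) ω) l) := by
    intro A j
    funext ω
    rw [hXAempty]
    ring
  have hint_term : ∀ (A : Finset (Fin n)) (j : Fin n), Integrable (fun ω =>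
      (f (fun i => X i ω) k - f (XA {j} ω) k) *
        (f (XA A ω) l - f (XA (insert j A) ω) l)) μ := by
    intro A j
    rw [hexp A j]
    exact ((hIntμ ∅ A).sub (hIntμ ∅ (insert j A))).sub
      ((hIntμ {j} A).sub (hIntμ {j} (insert j A)))
  have hterm : ∀ (A : Finset (Fin n)) (j : Fin n), j ∉ A →
      ∫ ω, (f (fun i => X i ω) k - f (XA {j} ω) k) *
        (f (XA A ω) l - f (XA (insert j A) ω) l) ∂μ
      = 2 * (II ∅ A - II ∅ (insert j A)) := by
    intro A j hj
    have I1 : Integrable (fun ω => f (XA ∅ ω) k * f (XA A ω) l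
        - f (XA ∅ ω) k * f (XA (insert j A) ω) l) μ :=
      (hIntμ ∅ A).sub (hIntμ ∅ (insert j A))
    have I2 : Integrable (fun ω => f (XA {j} ω) k * f (XA A ω) l
        - f (XA {j} ω) k * f (XA (insert j A) ω) l) μ :=
      (hIntμ {j} A).sub (hIntμ {j} (insert j A))
    rw [hexp A j, integral_sub I1 I2,
      integral_sub (hIntμ ∅ A) (hIntμ ∅ (insert j A)),
      integral_sub (hIntμ {j} A) (hIntμ {j} (insert j A))]
    have i1 : II {j} A = II ∅ (insert j A) := by
      have h := hIIsw {j} A {j}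
      rwa [hsd4 j, hsd2 A j hj] at h
    have i2 : II {j} (insert j A) = II ∅ A := by
      have h := hIIsw {j} (insert j A) {j}
      rwa [hsd4 j, hsd3 A j hj] at h
    have e1 : ∫ ω, f (XA ∅ ω) k * f (XA A ω) l ∂μ = II ∅ A := rfl
    have e2 : ∫ ω, f (XA ∅ ω) k * f (XA (insert j A) ω) l ∂μ = II ∅ (insert j A) := rfl
    have e3 : ∫ ω, f (XA {j} ω) k * f (XA A ω) l ∂μ = II {j} A := rfl
    have e4 : ∫ ω, f (XA {j} ω) k * f (XA (insert j A) ω) l ∂μ = II {j} (insert j A) := rfl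
    rw [e1, e2, e3, e4, i1, i2]
    ring
  -- assemble
  rw [hcent k, zero_mul, sub_zero]
  have hstep : ∀ A ∈ (Finset.univ : Finset (Fin n)).powerset.filter (· ≠ Finset.univ),
      ∫ ω, (1 / ((n.choose A.card : ℝ) * (n - A.card))) *
          ∑ j ∈ Aᶜ, (f (fun i => X i ω) k - f (XA {j} ω) k) *
            (f (XA A ω) l - f (XA (insert j A) ω) l) ∂μ
      = (1 / ((n.choose A.card : ℝ) * (n - A.card))) *
          ∑ j ∈ Aᶜ, (2 * (II ∅ A - II ∅ (insert j A))) := by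
    intro A hA
    rw [integral_const_mul, integral_finset_sum _ (fun j _ => hint_term A j)]
    congr 1
    refine Finset.sum_congr rfl fun j hj => hterm A j ?_
    simpa using hj
  calc ∫ ω, T ω k l ∂μ
      = ∫ ω, (1 / 2) * ∑ A ∈ (Finset.univ : Finset (Fin n)).powerset.filter
          (· ≠ Finset.univ), (1 / ((n.choose A.card : ℝ) * (n - A.card))) *
          ∑ j ∈ Aᶜ, (f (fun i => X i ω) k - f (XA {j} ω) k) *
            (f (XA A ω) l - f (XA (insert j A) ω) l) ∂μ := by
        simp only [hT]
    _ = (1 / 2) * ∑ A ∈ (Finset.univ : Finset (Fin n)).powerset.filter (· ≠ Finset.univ),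
          ∫ ω, (1 / ((n.choose A.card : ℝ) * (n - A.card))) *
          ∑ j ∈ Aᶜ, (f (fun i => X i ω) k - f (XA {j} ω) k) *
            (f (XA A ω) l - f (XA (insert j A) ω) l) ∂μ := by
        rw [integral_const_mul, integral_finset_sum _ (fun A _ =>
          ((integrable_finset_sum _ (fun j _ => hint_term A j)).const_mul _))]
    _ = (1 / 2) * ∑ A ∈ (Finset.univ : Finset (Fin n)).powerset.filter (· ≠ Finset.univ),
          (1 / ((n.choose A.card : ℝ) * (n - A.card))) *
          ∑ j ∈ Aᶜ, (2 * (II ∅ A - II ∅ (insert j A))) := by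
        rw [Finset.sum_congr rfl hstep]
    _ = ∑ A ∈ (Finset.univ : Finset (Fin n)).powerset.filter (· ≠ Finset.univ),
          (1 / ((n.choose A.card : ℝ) * (n - A.card))) *
          ∑ j ∈ Aᶜ, (II ∅ A - II ∅ (insert j A)) := by
        rw [Finset.mul_sum]
        refine Finset.sum_congr rfl fun A _ => ?_
        have h2s : ∑ j ∈ Aᶜ, 2 * (II ∅ A - II ∅ (insert j A))
            = 2 * ∑ j ∈ Aᶜ, (II ∅ A - II ∅ (insert j A)) := (Finset.mul_sum _ _ _).symm
        rw [h2s]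
        ring
    _ = II ∅ ∅ - II ∅ Finset.univ := telescope_sum' (fun B => II ∅ B)
    _ = ∫ ω, f (fun i => X i ω) k * f (fun i => X i ω) l ∂μ := by
        rw [hIIuniv, sub_zero]
        show (∫ ω, f (XA ∅ ω) k * f (XA ∅ ω) l ∂μ) = _
        simp only [hXAempty]
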